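/- Let n ≥ 2 and A = (a_{ij}) be an n × n real matrix with a_{ij}a_{ji} ≥ 0 for all 1 ≤ i < j ≤ n. Then σ₁(A)·σ₁(A|1) ≥ σ₂(A) + (n/(2(n−1)))·σ₁(A|1)², where σ₁(A) = Σᵢ a_{ii}, σ₁(A|1) = Σ_{i=2}^n a_{ii}, and σ₂(A) = Σ_{1≤i<j≤n}(a_{ii}a_{jj} − a_{ij}a_{ji}). -/
import Mathlib

/-- Proposition 2.1 (inequality): if `a_{ij}a_{ji} ≥ 0` for all `i ≠ j`, then
`σ₁(A)·σ₁(A|1) ≥ σ₂(A) + (n/(2(n−1)))·σ₁(A|1)²`. -/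
theorem stmt1 (n : ℕ) (hn : 2 ≤ n) (A : Matrix (Fin n) (Fin n) ℝ)
    (hA : ∀ i j : Fin n, i < j → 0 ≤ A i j * A j i) :
    (∑ i, A i i) * (∑ i ∈ Finset.univ.filter (fun i : Fin n => i.val ≠ 0), A i i) ≥
      (∑ i, ∑ j, if i < j then A i i * A j j - A i j * A j i else 0)
      + (n : ℝ) / (2 * ((n : ℝ) - 1)) *
          (∑ i ∈ Finset.univ.filter (fun i : Fin n => i.val ≠ 0), A i i) ^ 2 := by
  classical
  have hn0 : 0 < n := by omega
  set d : Fin n → ℝ := fun i => A i i with hd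
  set S := Finset.univ.filter (fun i : Fin n => i.val ≠ 0) with hS
  set z : Fin n := ⟨0, hn0⟩ with hz
  -- step 1: bound sigma2
  have step1 : (∑ i, ∑ j, if i < j then A i i * A j j - A i j * A j i else 0)
      ≤ ∑ i, ∑ j, if i < j then d i * d j else 0 := by
    apply Finset.sum_le_sum; intro i _
    apply Finset.sum_le_sum; intro j _
    by_cases h : i < j
    · simp [h, hd]; nlinarith [hA i j h]
    · simp [h]
  -- identity for double sum
  have key : (∑ i, d i)^2 = 2 * (∑ i, ∑ j, if i < j then d i * d j else 0) + ∑ i, d i ^ 2 := by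
    have h1 : (∑ i, d i)^2 = ∑ i, ∑ j, d i * d j := by
      rw [sq, Finset.sum_mul_sum]
    have h2 : ∀ i j : Fin n, d i * d j =
        (if i < j then d i * d j else 0) + (if j < i then d i * d j else 0)
          + (if i = j then d i * d j else 0) := by
      intro i j
      rcases lt_trichotomy i j with h | h | h
      · simp [h, not_lt_of_gt h, ne_of_lt h]
      · simp [h, lt_irrefl]
      · simp [h, not_lt_of_gt h, (ne_of_lt h).symm]
    have h3 : (∑ i, ∑ j, d i * d j) =
        (∑ i, ∑ j, if i < j then d i * d j else 0)
        + (∑ i, ∑ j, if j < i then d i * d j else 0)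
        + (∑ i, ∑ j, if i = j then d i * d j else 0) := by
      rw [← Finset.sum_add_distrib, ← Finset.sum_add_distrib]
      apply Finset.sum_congr rfl; intro i _
      rw [← Finset.sum_add_distrib, ← Finset.sum_add_distrib]
      exact Finset.sum_congr rfl fun j _ => h2 i j
    have h4 : (∑ i, ∑ j, if j < i then d i * d j else 0)
        = ∑ i, ∑ j, if i < j then d i * d j else 0 := by
      rw [Finset.sum_comm]
      apply Finset.sum_congr rfl; intro i _
      apply Finset.sum_congr rfl; intro j _
      by_cases h : i < j <;> simp [h, mul_comm]
    have h5 : (∑ i, ∑ j, if i = j then d i * d j else 0) = ∑ i, d i ^ 2 := by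
      apply Finset.sum_congr rfl; intro i _
      rw [Finset.sum_ite_eq Finset.univ i (fun j => d i * d j)]
      simp [sq]
    rw [h1, h3, h4, h5]; ring
  -- split sums over univ = {z} ∪ S
  have hsplit : ∀ f : Fin n → ℝ, (∑ i, f i) = f z + ∑ i ∈ S, f i := by
    intro f
    have : Finset.univ = insert z S := by
      ext i
      simp only [hS, Finset.mem_insert, Finset.mem_filter, Finset.mem_univ, true_and]
      constructor
      · intro _
        by_cases h : i.val = 0
        · left; exact Fin.ext h
        · right; exact h
      · intro _; trivial
    rw [this, Finset.sum_insert]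
    simp [hS, hz]
  have hcard : (S.card : ℝ) = (n : ℝ) - 1 := by
    have : S = Finset.univ \ {z} := by
      ext i
      simp only [hS, hz, Finset.mem_filter, Finset.mem_univ, true_and, Finset.mem_sdiff,
        Finset.mem_singleton]
      constructor
      · intro h he; exact h (by rw [he])
      · intro h he; exact h (Fin.ext he)
    rw [this, Finset.card_sdiff_of_subset (by simp)]
    simp
    have : 1 ≤ n := by omega
    push_cast [Nat.cast_sub this]
    ring
  -- Cauchy-Schwarz on S
  have cauchy : (∑ i ∈ S, d i)^2 ≤ ((n:ℝ) - 1) * ∑ i ∈ S, d i ^ 2 := by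
    have := sq_sum_le_card_mul_sum_sq (s := S) (f := d)
    calc (∑ i ∈ S, d i)^2 ≤ (S.card : ℝ) * ∑ i ∈ S, d i ^ 2 := by exact_mod_cast this
    _ = ((n:ℝ) - 1) * ∑ i ∈ S, d i ^ 2 := by rw [hcard]
  have hsum := hsplit d
  have hsumsq := hsplit (fun i => d i ^ 2)
  set t := ∑ i ∈ S, d i with ht
  set Q := ∑ i ∈ S, d i ^ 2 with hQ
  set P := ∑ i, ∑ j, if i < j then d i * d j else 0 with hP
  have hn1 : (1:ℝ) ≤ (n:ℝ) - 1 := by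
    have : (2:ℝ) ≤ (n:ℝ) := by exact_mod_cast hn
    linarith
  have hdiv : (n:ℝ) / (2 * ((n:ℝ) - 1)) * t^2 ≤ (d z + t) * t - P := by
    have hP2 : P = ((d z + t)^2 - (d z ^2 + Q)) / 2 := by
      have : (∑ i, d i)^2 = 2 * P + ∑ i, d i ^ 2 := key
      rw [hsum, hsumsq] at this
      linarith
    rw [hP2]
    rw [div_mul_eq_mul_div, div_le_iff₀ (by linarith)]
    have hQt : t^2 / ((n:ℝ)-1) ≤ Q := by
      rw [div_le_iff₀ (by linarith)]; linarith [cauchy]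
    nlinarith [cauchy, sq_nonneg t]
  have hgoal : (∑ i, A i i) * t ≥ P + (n:ℝ)/(2*((n:ℝ)-1)) * t^2 := by
    rw [show (∑ i, A i i) = d z + t from hsum]
    linarith [hdiv]
  calc (∑ i, A i i) * (∑ i ∈ S, d i) ≥ P + (n:ℝ)/(2*((n:ℝ)-1)) * t^2 := hgoal
  _ ≥ (∑ i, ∑ j, if i < j then A i i * A j j - A i j * A j i else 0)
      + (n:ℝ)/(2*((n:ℝ)-1)) * (∑ i ∈ S, d i)^2 := by
    have := step1
    linarith
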